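/- Let 0 → K → P → M → 0 be a short exact sequence of finitely generated kC_p-modules with P a permutation module, such that the surjection P → M does not restrict to an isomorphism from a direct summand of P onto a direct summand of M, and the injection K → P does not restrict to an isomorphism from a direct summand of K onto a direct summand of P. Then for every invariant c of M there is an invariant c' of K with c' ∈ {p-c, p-c+1}; in particular size(K) ≥ size(M) - 1. -/

import Mathlib

open Polynomial

noncomputable section

/-- `Mmod k i` is the `k[T]`-module `M_i = k[T]/(T^i)`. -/
abbrev Mmod (k : Type) [Field k] (i : ℕ) : Type :=
  Polynomial k ⧸ Ideal.span {(X : Polynomial k) ^ i}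

/-- A permutation `kC_p`-module: a direct sum of copies of `kC_p = k[T]/T^p`
and the trivial module `k = k[T]/T`. -/
def IsPermMod (k : Type) [Field k] (p : ℕ) (M : Type) [AddCommGroup M]
    [Module (Polynomial k) M] : Prop :=
  ∃ r s : ℕ,
    Nonempty (M ≃ₗ[Polynomial k] ((Fin r → Mmod k p) × (Fin s → Mmod k 1)))

/-- `m` has depth `i`: `m ∈ T^i M` but `m ∉ T^{i+1} M`. -/
def HasDepth (k : Type) [Field k] {M : Type} [AddCommGroup M] [Module (Polynomial k) M]
    (i : ℕ) (m : M) : Prop :=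
  (∃ y : M, m = (X : Polynomial k) ^ i • y) ∧ ¬ ∃ y : M, m = (X : Polynomial k) ^ (i + 1) • y

/-- `α` is the nilpotency index of `m` with respect to `T`. -/
def IsIndex (k : Type) [Field k] {M : Type} [AddCommGroup M] [Module (Polynomial k) M]
    (α : ℕ) (m : M) : Prop :=
  (X : Polynomial k) ^ α • m = 0 ∧ ∀ β < α, (X : Polynomial k) ^ β • m ≠ 0

/-- `M` admits a resolution `0 → P_s → ⋯ → P_0 → M → 0` by permutation `kC_p`-modules. -/
def HasPermRes (k : Type) [Field k] (p : ℕ) :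
    (s : ℕ) → (M : Type) → [AddCommGroup M] → [Module (Polynomial k) M] → Prop
  | 0, M, _, _ => IsPermMod k p M
  | (s + 1), M, _, _ =>
      ∃ (P : Type) (_ : AddCommGroup P) (_ : Module (Polynomial k) P)
        (f : P →ₗ[Polynomial k] M), IsPermMod k p P ∧ Function.Surjective f ∧
          HasPermRes k p s (LinearMap.ker f)

/-- The `p`-permutation dimension of `M`: minimal length of a permutation resolution. -/
def ppdim (k : Type) [Field k] (p : ℕ) (M : Type) [AddCommGroup M]
    [Module (Polynomial k) M] : ℕ :=
  sInf {s | HasPermRes k p s M}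

/-- The `p`-distance function: `f 1 = f p = 0` and
`f x = min (f (p-x)) (f (p-x+1)) + 1` for `2 ≤ x ≤ p-1`. -/
def IsSizeFun (p : ℕ) (f : ℕ → ℕ) : Prop :=
  f 1 = 0 ∧ f p = 0 ∧ ∀ x, 2 ≤ x → x ≤ p - 1 → f x = min (f (p - x)) (f (p - x + 1)) + 1

/-- `f : A → B` restricts to an isomorphism from a (nonzero) direct summand of `A`
onto a direct summand of `B`. -/
def RestrictsToSummandIso (k : Type) [Field k] {A B : Type}
    [AddCommGroup A] [Module (Polynomial k) A] [AddCommGroup B] [Module (Polynomial k) B]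
    (f : A →ₗ[Polynomial k] B) : Prop :=
  ∃ (A₁ A₂ : Submodule (Polynomial k) A) (B₁ B₂ : Submodule (Polynomial k) B),
    IsCompl A₁ A₂ ∧ IsCompl B₁ B₂ ∧ A₁ ≠ ⊥ ∧
      Submodule.map f A₁ = B₁ ∧ Disjoint A₁ (LinearMap.ker f)

namespace Aux
variable {k : Type} [Field k]

/-- quotient map -/
def qk (k : Type) [Field k] (i : ℕ) : Polynomial k →ₗ[Polynomial k] Mmod k i :=
  (Ideal.span {(X : Polynomial k) ^ i}).mkQ

lemma qk_surj (i : ℕ) (ξ : Mmod k i) : ∃ h : Polynomial k, ξ = qk k i h :=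
  (Submodule.mkQ_surjective _ ξ).imp fun _ h => h.symm

lemma qk_eq_zero {i : ℕ} {h : Polynomial k} : qk k i h = 0 ↔ (X : Polynomial k) ^ i ∣ h := by
  rw [qk, Submodule.mkQ_apply, Submodule.Quotient.mk_eq_zero, Ideal.mem_span_singleton]

lemma smul_qk (i : ℕ) (a h : Polynomial k) : a • qk k i h = qk k i (a * h) := by
  rw [qk, Submodule.mkQ_apply, Submodule.mkQ_apply, ← Submodule.Quotient.mk_smul, smul_eq_mul]

lemma pow_smul_qk_ne_zero {i t : ℕ} (ht : t < i) :
    (X : Polynomial k) ^ t • qk k i 1 ≠ 0 := by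
  rw [smul_qk, mul_one, Ne, qk_eq_zero, X_pow_dvd_iff]
  intro H
  have := H t ht
  simp [coeff_X_pow] at this

lemma ann (i : ℕ) (ξ : Mmod k i) : (X : Polynomial k) ^ i • ξ = 0 := by
  obtain ⟨h, rfl⟩ := qk_surj i ξ
  rw [smul_qk, qk_eq_zero]
  exact Dvd.intro h rfl

lemma ann' {i j : ℕ} (hij : i ≤ j) (ξ : Mmod k i) : (X : Polynomial k) ^ j • ξ = 0 := by
  obtain ⟨d, rfl⟩ := Nat.exists_eq_add_of_le hij
  rw [pow_add, mul_comm, mul_smul, ann, smul_zero]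

/-- cancellation: X^(a+b) ∣ X^a * h → X^b ∣ h -/
lemma dvd_cancel {a b : ℕ} {h : Polynomial k}
    (H : (X : Polynomial k) ^ (a + b) ∣ (X : Polynomial k) ^ a * h) :
    (X : Polynomial k) ^ b ∣ h := by
  rw [pow_add] at H
  exact (mul_dvd_mul_iff_left (pow_ne_zero a X_ne_zero)).mp H

lemma socle {i : ℕ} (hi : 1 ≤ i) {ξ : Mmod k i} (hξ : (X : Polynomial k) • ξ = 0) :
    ∃ h, ξ = qk k i ((X : Polynomial k) ^ (i - 1) * h) := by
  obtain ⟨l, rfl⟩ := qk_surj i ξ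
  have : (X : Polynomial k) ^ 1 • qk k i l = 0 := by rwa [pow_one]
  rw [smul_qk, qk_eq_zero] at this
  have : (X : Polynomial k) ^ (1 + (i-1)) ∣ (X : Polynomial k) ^ 1 * l := by
    rwa [show 1 + (i-1) = i from by omega]
  obtain ⟨d, hd⟩ := dvd_cancel this
  exact ⟨d, by rw [hd]⟩

/-- depth detection: X^d • ξ ≠ 0 in Mmod k i implies d < i -/
lemma lt_of_pow_smul_ne_zero {i d : ℕ} {ξ : Mmod k i}
    (h : (X : Polynomial k) ^ d • ξ ≠ 0) : d < i := by
  by_contra H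
  exact h (ann' (by omega) ξ)

lemma isUnit_of_not_X_dvd {i : ℕ} (hi : 1 ≤ i) {h : Polynomial k}
    (H : ¬ (X : Polynomial k) ∣ h) : IsUnit (Ideal.Quotient.mk (Ideal.span {(X : Polynomial k) ^ i}) h) := by
  rw [X_dvd_iff] at H
  have hh : h = X * h.divX + C (h.coeff 0) := (X_mul_divX_add h).symm
  rw [hh, map_add]
  refine IsNilpotent.isUnit_add_right_of_commute ⟨i, ?_⟩ ?_ (Commute.all _ _)
  · rw [← map_pow, mul_pow, Ideal.Quotient.eq_zero_iff_mem, Ideal.mem_span_singleton]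
    exact Dvd.intro _ rfl
  · exact (Ideal.Quotient.mk _).isUnit_map (isUnit_C.mpr (isUnit_iff_ne_zero.mpr H))

lemma qk_eq_mk (i : ℕ) (h : Polynomial k) :
    qk k i h = Ideal.Quotient.mk (Ideal.span {(X : Polynomial k) ^ i}) h := rfl


lemma smul_eq_qk_mul (i : ℕ) (a : Polynomial k) (ξ : Mmod k i) :
    a • ξ = qk k i a * ξ := by
  obtain ⟨h, rfl⟩ := qk_surj i ξ
  rw [smul_qk]
  rfl

/-- the retraction lemma: if `χ x` is a unit and `X^m • x = 0` then `span {x}` is a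
direct summand. -/
lemma exists_isCompl_span_singleton {N : Type} [AddCommGroup N] [Module (Polynomial k) N]
    {m : ℕ} (χ : N →ₗ[Polynomial k] Mmod k m) (x : N)
    (hx : (X : Polynomial k) ^ m • x = 0) (hu : IsUnit (χ x)) :
    ∃ C : Submodule (Polynomial k) N,
      IsCompl (Submodule.span (Polynomial k) {x}) C := by
  -- e : Mmod k m →ₗ N, qk h ↦ h • x
  have hker : Ideal.span {(X : Polynomial k) ^ m} ≤
      LinearMap.ker (LinearMap.toSpanSingleton (Polynomial k) N x) := by
    rw [Ideal.span_le]
    rintro a ha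
    rcases Set.mem_singleton_iff.mp ha with rfl
    simpa [LinearMap.toSpanSingleton] using hx
  set e : Mmod k m →ₗ[Polynomial k] N :=
    Submodule.liftQ _ (LinearMap.toSpanSingleton (Polynomial k) N x) hker with he
  have he_apply : ∀ h : Polynomial k, e (qk k m h) = h • x := fun h => rfl
  set u := hu.unit with hu'
  set ρ : N →ₗ[Polynomial k] N :=
    e ∘ₗ (LinearMap.mulLeft (Polynomial k) ((u⁻¹ : _) : Mmod k m)) ∘ₗ χ with hρ
  have key : ∀ q : N, χ (ρ q) = (↑u⁻¹ * χ q) * χ x := by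
    intro q
    obtain ⟨h, hh⟩ := qk_surj m ((↑u⁻¹ : Mmod k m) * χ q)
    simp only [hρ, LinearMap.comp_apply, LinearMap.mulLeft_apply, hh, he_apply]
    rw [map_smul, smul_eq_qk_mul]
  have hmem : ∀ q : N, ρ q ∈ Submodule.span (Polynomial k) {x} := by
    intro q
    obtain ⟨h, hh⟩ := qk_surj m ((↑u⁻¹ : Mmod k m) * χ q)
    simp only [hρ, LinearMap.comp_apply, LinearMap.mulLeft_apply, hh, he_apply]
    exact Submodule.smul_mem _ _ (Submodule.mem_span_singleton_self x)
  have hid : ∀ q ∈ Submodule.span (Polynomial k) {x}, ρ q = q := by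
    intro q hq
    rcases Submodule.mem_span_singleton.mp hq with ⟨a, rfl⟩
    have : ρ x = x := by
      simp only [hρ, LinearMap.comp_apply, LinearMap.mulLeft_apply]
      have : ((u⁻¹ : _) : Mmod k m) * χ x = 1 := by
        rw [hu']; exact Units.inv_mul_of_eq rfl
      rw [this, show (1 : Mmod k m) = qk k m 1 from rfl, he_apply, one_smul]
    rw [map_smul, this]
  have hproj : LinearMap.IsProj (Submodule.span (Polynomial k) {x}) ρ :=
    ⟨hmem, hid⟩
  exact ⟨LinearMap.ker ρ, hproj.isCompl⟩

variable {k : Type} [Field k]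

lemma isCompl_map {A A' : Type} [AddCommGroup A] [Module (Polynomial k) A]
    [AddCommGroup A'] [Module (Polynomial k) A'] (e : A ≃ₗ[Polynomial k] A')
    {p q : Submodule (Polynomial k) A} (h : IsCompl p q) :
    IsCompl (p.map (e : A →ₗ[Polynomial k] A')) (q.map (e : A →ₗ[Polynomial k] A')) := by
  constructor
  · rw [Submodule.disjoint_def]
    rintro x ⟨a, ha, rfl⟩ ⟨b, hb, hba⟩
    have hba' : b = a := e.injective hba
    subst hba'
    rw [(Submodule.disjoint_def.mp h.disjoint) b ha hb, map_zero]
  · rw [codisjoint_iff_le_sup]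
    rintro x -
    obtain ⟨a, b, ha, hb, hab⟩ := Submodule.codisjoint_iff_exists_add_eq.mp h.codisjoint (e.symm x)
    have : x = e a + e b := by
      rw [← map_add, hab]; simp
    rw [this]
    exact Submodule.add_mem_sup (Submodule.mem_map_of_mem ha) (Submodule.mem_map_of_mem hb)

lemma rtsi_transport {A B A' B' : Type}
    [AddCommGroup A] [Module (Polynomial k) A] [AddCommGroup B] [Module (Polynomial k) B]
    [AddCommGroup A'] [Module (Polynomial k) A'] [AddCommGroup B'] [Module (Polynomial k) B']
    (f : A →ₗ[Polynomial k] B) (eA : A ≃ₗ[Polynomial k] A') (eB : B ≃ₗ[Polynomial k] B')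
    (h : RestrictsToSummandIso k ((eB.toLinearMap ∘ₗ f) ∘ₗ eA.symm.toLinearMap)) :
    RestrictsToSummandIso k f := by
  obtain ⟨A₁, A₂, B₁, B₂, hA, hB, hne, hmap, hdisj⟩ := h
  set f' := (eB.toLinearMap ∘ₗ f) ∘ₗ eA.symm.toLinearMap with hf'
  refine ⟨A₁.map eA.symm.toLinearMap, A₂.map eA.symm.toLinearMap,
    B₁.map eB.symm.toLinearMap, B₂.map eB.symm.toLinearMap,
    isCompl_map eA.symm hA, isCompl_map eB.symm hB, ?_, ?_, ?_⟩
  · intro hbot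
    apply hne
    have := congrArg (Submodule.map eA.toLinearMap) hbot
    rwa [Submodule.map_bot, ← Submodule.map_comp, LinearEquiv.comp_coe,
      LinearEquiv.symm_trans_self, LinearEquiv.refl_toLinearMap, Submodule.map_id] at this
  · rw [← Submodule.map_comp]
    have : f ∘ₗ eA.symm.toLinearMap = eB.symm.toLinearMap ∘ₗ f' := by
      rw [hf']
      ext q
      simp
    rw [this, Submodule.map_comp, hmap]
  · rw [Submodule.disjoint_def]
    rintro x ⟨a, ha, rfl⟩ hker
    have : a ∈ LinearMap.ker f' := by
      rw [LinearMap.mem_ker] at hker ⊢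
      rw [hf']
      simp only [LinearMap.comp_apply, LinearEquiv.coe_coe]
      simp only [LinearEquiv.coe_coe] at hker
      rw [hker, map_zero]
    have := (Submodule.disjoint_def.mp hdisj) a ha this
    rw [this, map_zero]


lemma one_eq_qk (i : ℕ) : (1 : Mmod k i) = qk k i 1 := rfl

lemma one_ne_zero' {i : ℕ} (hi : 1 ≤ i) : (1 : Mmod k i) ≠ 0 := by
  have := pow_smul_qk_ne_zero (k := k) (show 0 < i by omega)
  rwa [pow_zero, one_smul, ← one_eq_qk] at this

lemma contra {nM : ℕ} {cM : Fin nM → ℕ} (hc : ∀ i, 1 ≤ cM i) (i₀ : Fin nM)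
    (q : (i : Fin nM) → Mmod k (cM i)) :
    (X : Polynomial k) ^ (cM i₀ - 1) • Pi.single (M := fun i => Mmod k (cM i)) i₀ 1 ≠
      (X : Polynomial k) ^ (cM i₀) • q := by
  intro h
  have h2 := congrFun h i₀
  rw [Pi.smul_apply, Pi.single_eq_same, Pi.smul_apply, ann] at h2
  exact pow_smul_qk_ne_zero (show cM i₀ - 1 < cM i₀ by have := hc i₀; omega)
    (by rw [← one_eq_qk (k := k)]; exact h2)

lemma isUnit_of_pow_smul_ne_zero {i : ℕ} (hi : 1 ≤ i) {ξ : Mmod k i}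
    (h : (X : Polynomial k) ^ (i - 1) • ξ ≠ 0) : IsUnit ξ := by
  obtain ⟨l, rfl⟩ := qk_surj i ξ
  rw [qk_eq_mk]
  apply isUnit_of_not_X_dvd hi
  rintro ⟨d, rfl⟩
  apply h
  rw [smul_qk, qk_eq_zero]
  exact ⟨d, by rw [← mul_assoc, ← pow_succ, show i - 1 + 1 = i by omega]⟩

lemma killT (ξ : Mmod k 1) : (X : Polynomial k) • ξ = 0 := by
  simpa using ann 1 ξ

set_option maxHeartbeats 2000000 in
/-- Main concrete lemma. -/
lemma main (p r s nM nK : ℕ) (hp2 : 2 ≤ p) (cM : Fin nM → ℕ) (hcM : ∀ i, 1 ≤ cM i ∧ cM i ≤ p)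
    (cK : Fin nK → ℕ) (hcK : ∀ i, 1 ≤ cK i ∧ cK i ≤ p)
    (f₀ : ((Fin r → Mmod k p) × (Fin s → Mmod k 1)) →ₗ[Polynomial k] ((i : Fin nM) → Mmod k (cM i)))
    (g₀ : ((j : Fin nK) → Mmod k (cK j)) →ₗ[Polynomial k] ((Fin r → Mmod k p) × (Fin s → Mmod k 1)))
    (hg₀ : Function.Injective g₀) (hf₀ : Function.Surjective f₀)
    (hexact₀ : LinearMap.range g₀ = LinearMap.ker f₀)
    (hfno₀ : ¬ RestrictsToSummandIso k f₀) :
    ∀ i₀ : Fin nM, ∃ j : Fin nK, cK j = p - cM i₀ ∨ cK j = p - cM i₀ + 1 := by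
  intro i₀
  set P₀ := (Fin r → Mmod k p) × (Fin s → Mmod k 1) with hP₀
  have hannP₀ : ∀ q : P₀, (X : Polynomial k) ^ p • q = 0 := by
    intro q
    have h1 : (X : Polynomial k) ^ p • q.1 = 0 := funext fun a => ann p (q.1 a)
    have h2 : (X : Polynomial k) ^ p • q.2 = 0 := funext fun b => ann' (by omega) (q.2 b)
    exact Prod.ext h1 h2
  obtain ⟨hc1, hcp⟩ := hcM i₀
  set c := cM i₀ with hc
  set y : (i : Fin nM) → Mmod k (cM i) := Pi.single i₀ 1 with hy
  have hXcy : (X : Polynomial k) ^ c • y = 0 := by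
    funext jj
    rw [Pi.smul_apply]
    by_cases hjj : jj = i₀
    · subst hjj; rw [hy, Pi.single_eq_same, ann, Pi.zero_apply]
    · rw [hy, Pi.single_eq_of_ne hjj, smul_zero, Pi.zero_apply]
  have hXc1y : ∀ q, (X : Polynomial k) ^ (c - 1) • y ≠ (X : Polynomial k) ^ c • q :=
    fun q => contra (fun i => (hcM i).1) i₀ q
  obtain ⟨z₀, hz₀⟩ := hf₀ y
  by_cases hcase : c = p
  · -- c = p : contradiction with hfno₀
    exfalso
    apply hfno₀
    have hfx : f₀ ((X : Polynomial k) ^ (p - 1) • z₀) = (X : Polynomial k) ^ (p - 1) • y := by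
      rw [map_smul, hz₀]
    have hXy : (X : Polynomial k) ^ (p - 1) • y ≠ 0 := by
      intro h0
      have h2 := congrFun h0 i₀
      rw [Pi.smul_apply, hy, Pi.single_eq_same, Pi.zero_apply] at h2
      exact pow_smul_qk_ne_zero (show p - 1 < c by omega)
        (by rw [← one_eq_qk (k := k)]; exact h2)
    have hXx : (X : Polynomial k) ^ (p - 1) • z₀ ≠ 0 := fun h0 => hXy (by rw [← hfx, h0, map_zero])
    have hsnd : (X : Polynomial k) ^ (p - 1) • z₀.2 = 0 := funext fun b => ann' (by omega) (z₀.2 b)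
    have hfst : (X : Polynomial k) ^ (p - 1) • z₀.1 ≠ 0 := by
      intro h0
      exact hXx (Prod.ext h0 hsnd)
    obtain ⟨a, ha⟩ := Function.ne_iff.mp hfst
    rw [Pi.smul_apply, Pi.zero_apply] at ha
    have hua : IsUnit (z₀.1 a) := isUnit_of_pow_smul_ne_zero (by omega) ha
    -- retraction on P₀
    set χP : P₀ →ₗ[Polynomial k] Mmod k p :=
      (LinearMap.proj a) ∘ₗ (LinearMap.fst (Polynomial k) _ _) with hχP
    have hχPx : χP z₀ = z₀.1 a := rfl
    obtain ⟨A₂, hA⟩ := exists_isCompl_span_singleton χP z₀ (hannP₀ z₀) (by rwa [hχPx])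
    -- retraction on M₀
    set χM := LinearMap.proj (R := Polynomial k) (φ := fun i : Fin nM => Mmod k (cM i)) i₀ with hχM
    have hχMy : χM y = 1 := by rw [hχM, LinearMap.proj_apply, hy, Pi.single_eq_same]
    obtain ⟨B₂, hB⟩ := exists_isCompl_span_singleton χM y
      (by rw [show cM i₀ = c from rfl, hXcy]) (by rw [hχMy]; exact isUnit_one)
    refine ⟨_, A₂, _, B₂, hA, hB, ?_, ?_, ?_⟩
    · rw [Ne, Submodule.span_singleton_eq_bot]
      intro h0
      exact hXx (by rw [h0, smul_zero])
    · rw [Submodule.map_span, Set.image_singleton, hz₀]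
    · rw [Submodule.disjoint_def]
      intro q hq hker
      obtain ⟨h, rfl⟩ := Submodule.mem_span_singleton.mp hq
      rw [LinearMap.mem_ker, map_smul, hz₀] at hker
      have h2 := congrFun hker i₀
      rw [Pi.smul_apply, hy, Pi.single_eq_same, Pi.zero_apply, smul_eq_qk_mul, mul_one] at h2
      obtain ⟨d, hd⟩ := qk_eq_zero.mp h2
      rw [hd, mul_comm, mul_smul, show cM i₀ = p from hcase, hannP₀, smul_zero]
  · have hclt : c < p := lt_of_le_of_ne hcp hcase
    by_cases hAcase : ∃ z : (Fin r → Mmod k p) × (Fin s → Mmod k 1),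
        f₀ z = y ∧ (X : Polynomial k) ^ (p - 1) • z ≠ 0
    · -- Case A
      obtain ⟨z, hz, hz9⟩ := hAcase
      have hfw₀ : f₀ ((X : Polynomial k) ^ c • z) = 0 := by rw [map_smul, hz, hXcy]
      have : (X : Polynomial k) ^ c • z ∈ LinearMap.range g₀ := by
        rw [hexact₀, LinearMap.mem_ker]; exact hfw₀
      obtain ⟨n₀, hn₀⟩ := this
      set n := (X : Polynomial k) ^ (p - c - 1) • n₀ with hn
      have hgn : g₀ n = (X : Polynomial k) ^ (p - 1) • z := by
        rw [hn, map_smul, hn₀, smul_smul, ← pow_add,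
          show p - c - 1 + c = p - 1 by omega]
      have hXn : (X : Polynomial k) • n = 0 := by
        apply hg₀
        rw [map_smul, hgn, smul_smul, ← pow_succ', map_zero,
          show p - 1 + 1 = p by omega, hannP₀]
      have hnne : n ≠ 0 := by
        intro h0
        rw [h0, map_zero] at hgn
        exact hz9 hgn.symm
      obtain ⟨j, hj⟩ := Function.ne_iff.mp hnne
      rw [Pi.zero_apply] at hj
      have hjlow : p - c ≤ cK j := by
        have : (X : Polynomial k) ^ (p - c - 1) • n₀ j ≠ 0 := by
          rw [hn] at hj
          rwa [Pi.smul_apply] at hj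
        have := lt_of_pow_smul_ne_zero this
        omega
      by_cases hcc : c = 1
      · exact ⟨j, by have := (hcK j).2; omega⟩
      · have hc2 : 2 ≤ c := by omega
        by_cases hwin : ∃ j' : Fin nK, cK j' = p - c ∨ cK j' = p - c + 1
        · exact hwin
        · exfalso
          push_neg at hwin
          -- construct n'
          have hn'ex : ∀ j' : Fin nK, ∃ ξ : Mmod k (cK j'),
              (X : Polynomial k) ^ (p - c + 1) • ξ = n j' := by
            intro j'
            by_cases h0 : n j' = 0
            · exact ⟨0, by rw [smul_zero, h0]⟩
            · have hb2 : p - c + 2 ≤ cK j' := by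
                have h1 : (X : Polynomial k) ^ (p - c - 1) • n₀ j' ≠ 0 := by
                  rw [hn] at h0
                  rwa [Pi.smul_apply] at h0
                have h2 := lt_of_pow_smul_ne_zero h1
                have h3 := (hwin j').1
                have h4 := (hwin j').2
                omega
              have hXnj : (X : Polynomial k) • n j' = 0 := by
                have := congrFun hXn j'
                rwa [Pi.smul_apply, Pi.zero_apply] at this
              obtain ⟨h, hh⟩ := socle (by omega) hXnj
              refine ⟨qk k _ ((X : Polynomial k) ^ (cK j' - (p - c + 2)) * h), ?_⟩
              rw [smul_qk, ← mul_assoc, ← pow_add, hh,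
                show p - c + 1 + (cK j' - (p - c + 2)) = cK j' - 1 by omega]
          choose n' hn' using hn'ex
          have hXN' : (X : Polynomial k) ^ (p - c + 1) • n' = n := by
            funext j'
            rw [Pi.smul_apply, hn']
          set w' := g₀ n' with hw'def
          have hw' : (X : Polynomial k) ^ (p - c + 1) • w' = (X : Polynomial k) ^ (p - 1) • z := by
            rw [hw'def, ← map_smul, hXN', hgn]
          have hfst : ∀ a, (X : Polynomial k) ^ (p - c + 1) • w'.1 a
              = (X : Polynomial k) ^ (p - 1) • z.1 a := by
            intro a
            have := congrArg Prod.fst hw'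
            exact congrFun this a
          have hdiv : ∀ a, ∃ η : Mmod k p, w'.1 a
              = (X : Polynomial k) ^ (c - 2) • z.1 a + (X : Polynomial k) ^ (c - 1) • η := by
            intro a
            obtain ⟨h, hh⟩ := qk_surj p (w'.1 a)
            obtain ⟨l, hl⟩ := qk_surj p (z.1 a)
            have h1 : qk k p ((X : Polynomial k) ^ (p - c + 1) * h
                - (X : Polynomial k) ^ (p - 1) * l) = 0 := by
              rw [map_sub, ← smul_qk, ← smul_qk, ← hh, ← hl, hfst a, sub_self]
            rw [qk_eq_zero] at h1
            have h2 : (X : Polynomial k) ^ (p - c + 1) * h - (X : Polynomial k) ^ (p - 1) * l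
                = (X : Polynomial k) ^ (p - c + 1) * (h - (X : Polynomial k) ^ (c - 2) * l) := by
              rw [mul_sub, ← mul_assoc, ← pow_add, show p - c + 1 + (c - 2) = p - 1 by omega]
            rw [h2] at h1
            have h1' : (X : Polynomial k) ^ (p - c + 1 + (c - 1)) ∣
                (X : Polynomial k) ^ (p - c + 1) * (h - (X : Polynomial k) ^ (c - 2) * l) := by
              rw [show p - c + 1 + (c - 1) = p by omega]
              exact h1
            obtain ⟨d, hd⟩ := dvd_cancel h1'
            refine ⟨qk k p d, ?_⟩
            rw [hh, hl, smul_qk, smul_qk, ← map_add]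
            congr 1
            have : h = (X : Polynomial k) ^ (c - 2) * l + (X : Polynomial k) ^ (c - 1) * d := by
              rw [← hd]; ring
            rw [this]
          choose η hη using hdiv
          have hXw' : (X : Polynomial k) • w'
              = (X : Polynomial k) ^ (c - 1) • ((z.1, 0) : (Fin r → Mmod k p) × (Fin s → Mmod k 1))
                + (X : Polynomial k) ^ c • ((η, 0) : (Fin r → Mmod k p) × (Fin s → Mmod k 1)) := by
            apply Prod.ext
            · show (X : Polynomial k) • w'.1 = _
              funext a
              have : ((X : Polynomial k) • w'.1) a = (X : Polynomial k) • w'.1 a := rfl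
              rw [this, hη a, smul_add, smul_smul, smul_smul, ← pow_succ',
                ← pow_succ', show c - 2 + 1 = c - 1 by omega, show c - 1 + 1 = c by omega]
              rfl
            · show (X : Polynomial k) • w'.2 = _
              funext b
              rw [Pi.smul_apply, killT]
              show (0 : Mmod k 1) = ((X : Polynomial k) ^ (c-1) • (0 : Fin s → Mmod k 1)
                + (X : Polynomial k) ^ c • (0 : Fin s → Mmod k 1)) b
              rw [smul_zero, smul_zero, add_zero, Pi.zero_apply]
          have hfw' : f₀ w' = 0 := by
            have : w' ∈ LinearMap.range g₀ := ⟨n', rfl⟩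
            rw [hexact₀, LinearMap.mem_ker] at this
            exact this
          have hzsum : ((z.1, 0) : (Fin r → Mmod k p) × (Fin s → Mmod k 1))
              + ((0, z.2) : (Fin r → Mmod k p) × (Fin s → Mmod k 1)) = z := by
            apply Prod.ext
            · rw [Prod.fst_add]; exact add_zero z.1
            · rw [Prod.snd_add]; exact zero_add z.2
          have hzsplit : f₀ ((z.1, 0) : (Fin r → Mmod k p) × (Fin s → Mmod k 1))
              = y - f₀ ((0, z.2) : (Fin r → Mmod k p) × (Fin s → Mmod k 1)) := by
            apply eq_sub_of_add_eq
            rw [← map_add, hzsum, hz]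
          set τ := f₀ ((0, z.2) : (Fin r → Mmod k p) × (Fin s → Mmod k 1)) with hτ
          have hXτ : (X : Polynomial k) • τ = 0 := by
            rw [hτ, ← map_smul]
            have : (X : Polynomial k) • ((0, z.2) : (Fin r → Mmod k p) × (Fin s → Mmod k 1))
                = 0 := by
              apply Prod.ext
              · show (X : Polynomial k) • (0 : Fin r → Mmod k p) = 0
                rw [smul_zero]
              · show (X : Polynomial k) • z.2 = 0
                funext b
                rw [Pi.smul_apply, killT, Pi.zero_apply]
            rw [this, map_zero]
          have hkey : (0 : (i : Fin nM) → Mmod k (cM i))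
              = (X : Polynomial k) ^ (c - 1) • y + (X : Polynomial k) ^ c • f₀ (η, 0) := by
            have h1 : (0 : (i : Fin nM) → Mmod k (cM i)) = f₀ ((X : Polynomial k) • w') := by
              rw [map_smul, hfw', smul_zero]
            rw [h1, hXw', map_add, map_smul, map_smul, hzsplit, smul_sub]
            have h2 : (X : Polynomial k) ^ (c - 1) • τ = 0 := by
              rw [show c - 1 = c - 2 + 1 by omega, pow_succ, mul_smul, hXτ, smul_zero]
            rw [h2, sub_zero]
          exact hXc1y (-(f₀ (η, 0))) (by
            rw [smul_neg]
            exact eq_neg_of_add_eq_zero_left hkey.symm)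
    · -- Case B
      push_neg at hAcase
      have hzz : (X : Polynomial k) ^ (p - 1) • z₀ = 0 := hAcase z₀ hz₀
      have hXz1 : ∀ a, (X : Polynomial k) ^ (p - 1) • z₀.1 a = 0 := by
        intro a
        have h1 : (X : Polynomial k) ^ (p - 1) • z₀.1 = 0 := congrArg Prod.fst hzz
        have h2 := congrFun h1 a
        rwa [Pi.smul_apply, Pi.zero_apply] at h2
      have hvex : ∀ a, ∃ ω : Mmod k p, z₀.1 a = (X : Polynomial k) • ω := by
        intro a
        obtain ⟨h, hh⟩ := qk_surj p (z₀.1 a)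
        have h1 : qk k p ((X : Polynomial k) ^ (p - 1) * h) = 0 := by
          rw [← smul_qk, ← hh]; exact hXz1 a
        rw [qk_eq_zero] at h1
        have h2 : (X : Polynomial k) ^ (p - 1 + 1) ∣ (X : Polynomial k) ^ (p - 1) * h := by
          rw [show p - 1 + 1 = p by omega]; exact h1
        obtain ⟨d, hd⟩ := dvd_cancel h2
        refine ⟨qk k p d, ?_⟩
        rw [hh, hd, ← smul_qk, pow_one]
      choose v hv using hvex
      have hyeq : y = (X : Polynomial k) • f₀ (v, 0) + f₀ (0, z₀.2) := by
        rw [← map_smul, ← map_add, ← hz₀]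
        congr 1
        apply Prod.ext
        · rw [Prod.fst_add]
          funext a
          show z₀.1 a = ((X : Polynomial k) • v + 0) a
          rw [Pi.add_apply, Pi.zero_apply, add_zero, Pi.smul_apply, ← hv a]
        · rw [Prod.snd_add]
          show z₀.2 = (X : Polynomial k) • (0 : Fin s → Mmod k 1) + z₀.2
          rw [smul_zero, zero_add]
      set τ' := f₀ ((0, z₀.2) : (Fin r → Mmod k p) × (Fin s → Mmod k 1)) with hτ'
      have hXpair : (X : Polynomial k) • ((0, z₀.2) : (Fin r → Mmod k p) × (Fin s → Mmod k 1))
          = 0 := by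
        apply Prod.ext
        · show (X : Polynomial k) • (0 : Fin r → Mmod k p) = 0
          rw [smul_zero]
        · show (X : Polynomial k) • z₀.2 = 0
          funext b
          rw [Pi.smul_apply, killT, Pi.zero_apply]
      have hXτ' : (X : Polynomial k) • τ' = 0 := by
        rw [hτ', ← map_smul, hXpair, map_zero]
      by_cases hc2 : 2 ≤ c
      · exfalso
        apply hXc1y (f₀ (v, 0))
        rw [hyeq, smul_add,
          show (X : Polynomial k) ^ (c - 1) • ((X : Polynomial k) • f₀ (v, 0))
              = (X : Polynomial k) ^ c • f₀ (v, 0) from by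
            rw [smul_smul, ← pow_succ, show c - 1 + 1 = c by omega],
          show (X : Polynomial k) ^ (c - 1) • τ' = 0 from by
            rw [show c - 1 = c - 2 + 1 by omega, pow_succ, mul_smul, hXτ', smul_zero],
          add_zero]
      · -- c = 1 : contradiction with hfno₀
        exfalso
        apply hfno₀
        have hyXM : ∀ q : (i : Fin nM) → Mmod k (cM i), y ≠ (X : Polynomial k) • q := by
          intro q hq
          have h2 := congrFun hq i₀
          rw [hy, Pi.single_eq_same, Pi.smul_apply] at h2
          have h3 : (X : Polynomial k) • q i₀ = 0 := by
            have h4 := ann' (show cM i₀ ≤ 1 by omega) (q i₀)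
            rwa [pow_one] at h4
          exact one_ne_zero' hc1 (h2.trans h3)
        have hy'XM : ∀ q, τ' ≠ (X : Polynomial k) • q := by
          intro q hq
          apply hyXM (f₀ (v, 0) + q)
          rw [hyeq, hq, smul_add]
        have hy'ne : τ' ≠ 0 := fun h0 => hy'XM 0 (by rw [h0, smul_zero])
        have htne : z₀.2 ≠ 0 := by
          intro h0
          apply hy'ne
          rw [hτ', show ((0, z₀.2) : (Fin r → Mmod k p) × (Fin s → Mmod k 1)) = 0 from by
            rw [h0]; rfl, map_zero]
        obtain ⟨a, hta⟩ := Function.ne_iff.mp htne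
        rw [Pi.zero_apply] at hta
        have hut : IsUnit (z₀.2 a) := by
          obtain ⟨h, hh⟩ := qk_surj 1 (z₀.2 a)
          rw [hh, qk_eq_mk]
          apply isUnit_of_not_X_dvd le_rfl
          rintro ⟨d, rfl⟩
          apply hta
          rw [hh, qk_eq_zero]
          exact ⟨d, by rw [pow_one]⟩
        have hy'i : ∃ i₁ : Fin nM, ¬ ∃ η : Mmod k (cM i₁), τ' i₁ = (X : Polynomial k) • η := by
          by_contra hno
          push_neg at hno
          choose η hη using hno
          exact hy'XM η (funext fun i => by rw [Pi.smul_apply]; exact hη i)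
        obtain ⟨i₁, hi₁⟩ := hy'i
        have hXy'i : (X : Polynomial k) • τ' i₁ = 0 := by
          have h5 := congrFun hXτ' i₁
          rwa [Pi.smul_apply, Pi.zero_apply] at h5
        have hci1 : cM i₁ = 1 := by
          by_contra hne2
          have h2 : 2 ≤ cM i₁ := by have := (hcM i₁).1; omega
          obtain ⟨h, hh⟩ := socle (by omega) hXy'i
          apply hi₁
          refine ⟨qk k (cM i₁) ((X : Polynomial k) ^ (cM i₁ - 2) * h), ?_⟩
          rw [hh, smul_qk, ← mul_assoc, ← pow_succ', show cM i₁ - 2 + 1 = cM i₁ - 1 by omega]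
        have huy' : IsUnit (τ' i₁) := by
          obtain ⟨h, hh⟩ := qk_surj (cM i₁) (τ' i₁)
          rw [hh, qk_eq_mk]
          apply isUnit_of_not_X_dvd (hcM i₁).1
          rintro ⟨d, rfl⟩
          exact hi₁ ⟨qk k (cM i₁) d, by rw [hh]; exact (smul_qk _ _ _).symm⟩
        set χP1 : ((Fin r → Mmod k p) × (Fin s → Mmod k 1)) →ₗ[Polynomial k] Mmod k 1 :=
          (LinearMap.proj a) ∘ₗ (LinearMap.snd (Polynomial k) _ _) with hχP1
        have hXone : (X : Polynomial k) ^ 1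
            • ((0, z₀.2) : (Fin r → Mmod k p) × (Fin s → Mmod k 1)) = 0 := by
          apply Prod.ext
          · show (X : Polynomial k) ^ 1 • (0 : Fin r → Mmod k p) = 0
            rw [smul_zero]
          · show (X : Polynomial k) ^ 1 • z₀.2 = 0
            funext b
            rw [Pi.smul_apply, Pi.zero_apply]
            exact ann' (le_refl 1) (z₀.2 b)
        obtain ⟨A₂, hA⟩ := exists_isCompl_span_singleton χP1
          ((0, z₀.2) : (Fin r → Mmod k p) × (Fin s → Mmod k 1)) hXone hut
        set χM1 := LinearMap.proj (R := Polynomial k) (φ := fun i : Fin nM => Mmod k (cM i)) i₁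
          with hχM1
        have hXy'ann : (X : Polynomial k) ^ (cM i₁) • τ' = 0 := by
          funext jj
          rw [Pi.smul_apply, Pi.zero_apply, hci1, pow_one]
          have h8 := congrFun hXτ' jj
          rwa [Pi.smul_apply, Pi.zero_apply] at h8
        obtain ⟨B₂, hB⟩ := exists_isCompl_span_singleton χM1 τ' hXy'ann huy'
        refine ⟨_, A₂, _, B₂, hA, hB, ?_, ?_, ?_⟩
        · rw [Ne, Submodule.span_singleton_eq_bot]
          intro h0
          apply hta
          have h6 : z₀.2 = 0 := congrArg Prod.snd h0
          rw [h6, Pi.zero_apply]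
        · rw [Submodule.map_span, Set.image_singleton, ← hτ']
        · rw [Submodule.disjoint_def]
          intro q hq hker
          obtain ⟨h, rfl⟩ := Submodule.mem_span_singleton.mp hq
          rw [LinearMap.mem_ker, map_smul, ← hτ'] at hker
          have h7 := congrFun hker i₁
          rw [Pi.smul_apply, Pi.zero_apply] at h7
          obtain ⟨l, hl⟩ := qk_surj (cM i₁) (τ' i₁)
          rw [hl, smul_qk, qk_eq_zero, hci1, pow_one] at h7
          have hXl : ¬ (X : Polynomial k) ∣ l := by
            rintro ⟨d, rfl⟩
            exact hi₁ ⟨qk k (cM i₁) d, by rw [hl]; exact (smul_qk _ _ _).symm⟩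
          have hXh : (X : Polynomial k) ∣ h := by
            rcases (Polynomial.prime_X (R := k)).2.2 h l h7 with h8 | h8
            · exact h8
            · exact absurd h8 hXl
          obtain ⟨d, rfl⟩ := hXh
          rw [mul_comm, mul_smul, hXpair, smul_zero]

end Aux


/-- Let `0 → K → P → M → 0` be a short exact sequence of finitely generated
`kC_p`-modules with `P` a permutation module, such that neither the surjection
`P → M` nor the injection `K → P` restricts to an isomorphism between direct
summands. Then for every invariant `c` of `M` there is an invariant `c'` of `K`
with `c' ∈ {p-c, p-c+1}`; in particular `size K ≥ size M - 1`. -/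
theorem stmt11 (k : Type) [Field k] (p : ℕ) (hp : p.Prime) [CharP k p]
    (K P M : Type) [AddCommGroup K] [Module (Polynomial k) K]
    [AddCommGroup P] [Module (Polynomial k) P]
    [AddCommGroup M] [Module (Polynomial k) M]
    [Module.Finite (Polynomial k) K] [Module.Finite (Polynomial k) P]
    [Module.Finite (Polynomial k) M]
    (hannK : ∀ m : K, (X : Polynomial k) ^ p • m = 0)
    (hannM : ∀ m : M, (X : Polynomial k) ^ p • m = 0)
    (hP : IsPermMod k p P)
    (g : K →ₗ[Polynomial k] P) (f : P →ₗ[Polynomial k] M)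
    (hg : Function.Injective g) (hf : Function.Surjective f)
    (hexact : LinearMap.range g = LinearMap.ker f)
    (hfno : ¬ RestrictsToSummandIso k f) (hgno : ¬ RestrictsToSummandIso k g)
    -- invariants of `M` and `K`
    (nM : ℕ) (cM : Fin nM → ℕ) (hcM : ∀ i, 1 ≤ cM i ∧ cM i ≤ p)
    (eM : M ≃ₗ[Polynomial k] ((i : Fin nM) → Mmod k (cM i)))
    (nK : ℕ) (cK : Fin nK → ℕ) (hcK : ∀ i, 1 ≤ cK i ∧ cK i ≤ p)
    (eK : K ≃ₗ[Polynomial k] ((i : Fin nK) → Mmod k (cK i))) :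
    (∀ i : Fin nM, ∃ j : Fin nK, cK j = p - cM i ∨ cK j = p - cM i + 1) ∧
      ∀ f' : ℕ → ℕ, IsSizeFun p f' →
        Finset.univ.sup (fun i => f' (cM i)) ≤ Finset.univ.sup (fun j => f' (cK j)) + 1 := by
  obtain ⟨r, s, ⟨eP⟩⟩ := hP
  set f₀ := (eM.toLinearMap ∘ₗ f) ∘ₗ eP.symm.toLinearMap with hf₀def
  set g₀ := (eP.toLinearMap ∘ₗ g) ∘ₗ eK.symm.toLinearMap with hg₀def
  have hg₀ : Function.Injective ⇑g₀ := by
    rw [hg₀def]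
    simp only [LinearMap.coe_comp, LinearEquiv.coe_coe]
    exact (eP.injective.comp hg).comp eK.symm.injective
  have hf₀surj : Function.Surjective ⇑f₀ := by
    rw [hf₀def]
    simp only [LinearMap.coe_comp, LinearEquiv.coe_coe]
    exact (eM.surjective.comp hf).comp eP.symm.surjective
  have hexact₀ : LinearMap.range g₀ = LinearMap.ker f₀ := by
    rw [hg₀def, hf₀def]
    rw [LinearMap.range_comp, LinearEquiv.range, Submodule.map_top, LinearMap.range_comp,
      hexact, LinearMap.ker_comp, LinearMap.ker_comp, LinearEquiv.ker, Submodule.comap_bot]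
    exact Submodule.map_equiv_eq_comap_symm eP _
  have hfno₀ : ¬ RestrictsToSummandIso k f₀ := fun h => hfno (Aux.rtsi_transport f eP eM h)
  have part1 : ∀ i : Fin nM, ∃ j : Fin nK, cK j = p - cM i ∨ cK j = p - cM i + 1 :=
    Aux.main p r s nM nK hp.two_le cM hcM cK hcK f₀ g₀ hg₀ hf₀surj hexact₀ hfno₀
  refine ⟨part1, ?_⟩
  intro f' hsf
  apply Finset.sup_le
  intro i _
  obtain ⟨j, hj⟩ := part1 i
  have hle : f' (cK j) ≤ Finset.univ.sup (fun j => f' (cK j)) :=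
    Finset.le_sup (f := fun j => f' (cK j)) (Finset.mem_univ j)
  obtain ⟨hc1, hcp⟩ := hcM i
  by_cases h1 : cM i = 1
  · rw [h1, hsf.1]; omega
  by_cases h2 : cM i = p
  · rw [h2, hsf.2.1]; omega
  · rw [hsf.2.2 (cM i) (by omega) (by omega)]
    have hmin : min (f' (p - cM i)) (f' (p - cM i + 1)) ≤ f' (cK j) := by
      rcases hj with hj | hj
      · rw [hj]; exact min_le_left _ _
      · rw [hj]; exact min_le_right _ _
    omega
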